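/- Let α > 1 and P(u) = ((1+u²)^α − 1)/(2α). Then for any u ≥ 0 and any t with 0 < t ≤ 1, one has t^(2α) P(u) ≤ P(t u) ≤ t² P(u). -/
import Mathlib

open Set

lemma mono_diff_aux (α : ℝ) (hα : 1 ≤ α) (w : ℝ) (hw : 0 ≤ w) :
    MonotoneOn (fun y : ℝ => (y + w) ^ α - y ^ α) (Set.Ici 0) := by
  have hderiv : ∀ y : ℝ, HasDerivAt (fun y : ℝ => (y + w) ^ α - y ^ α)
      (α * (y + w) ^ (α - 1) * 1 - α * y ^ (α - 1)) y := by
    intro y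
    exact ((Real.hasDerivAt_rpow_const (Or.inr hα)).comp y
      ((hasDerivAt_id y).add_const w)).sub (Real.hasDerivAt_rpow_const (Or.inr hα))
  apply monotoneOn_of_deriv_nonneg (convex_Ici 0)
  · exact (fun y _ => ((hderiv y).differentiableAt.continuousAt.continuousWithinAt))
  · exact fun y _ => ((hderiv y).differentiableAt).differentiableWithinAt
  · intro y hy
    rw [interior_Ici] at hy
    rw [(hderiv y).deriv]
    have h1 : y ^ (α - 1) ≤ (y + w) ^ (α - 1) :=
      Real.rpow_le_rpow (le_of_lt hy) (by linarith) (by linarith)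
    have hα0 : 0 < α := by linarith
    nlinarith

theorem stmt_1 (α : ℝ) (hα : 1 < α)
    (P : ℝ → ℝ) (hP : ∀ s : ℝ, P s = ((1 + s ^ 2) ^ α - 1) / (2 * α)) :
    ∀ u : ℝ, 0 ≤ u → ∀ t : ℝ, 0 < t → t ≤ 1 →
      t ^ (2 * α) * P u ≤ P (t * u) ∧ P (t * u) ≤ t ^ 2 * P u := by
  intro u hu t ht ht1
  set s : ℝ := t ^ 2 with hs
  set x : ℝ := u ^ 2 with hx
  have hs0 : 0 < s := by positivity
  have hs1 : s ≤ 1 := by nlinarith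
  have hx0 : 0 ≤ x := by positivity
  have hα1 : (1:ℝ) ≤ α := le_of_lt hα
  have h2α : (0:ℝ) < 2 * α := by linarith
  -- upper bound on numerators
  have key_up : (1 + s * x) ^ α - 1 ≤ s * ((1 + x) ^ α - 1) := by
    have hc := (convexOn_rpow hα1).2 (show (1:ℝ) + x ∈ Ici (0:ℝ) by simp; linarith)
      (show (1:ℝ) ∈ Ici (0:ℝ) by simp) (le_of_lt hs0) (by linarith : (0:ℝ) ≤ 1 - s)
      (by ring)
    simp only [smul_eq_mul, Real.one_rpow] at hc
    have heq : s * (1 + x) + (1 - s) * 1 = 1 + s * x := by ring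
    rw [heq] at hc
    linarith
  -- lower bound on numerators
  have key_lo : s ^ α * ((1 + x) ^ α - 1) ≤ (1 + s * x) ^ α - 1 := by
    have hm := mono_diff_aux α hα1 (s * x) (by positivity)
      (show s ∈ Ici (0:ℝ) from le_of_lt hs0) (show (1:ℝ) ∈ Ici (0:ℝ) by simp) hs1
    simp only at hm
    have h1 : s ^ α * (1 + x) ^ α = (s + s * x) ^ α := by
      rw [← Real.mul_rpow (le_of_lt hs0) (by linarith)]; ring_nf
    have h2 : (1 : ℝ) ^ α = 1 := Real.one_rpow α
    rw [h2] at hm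
    linarith [hm, h1.ge, h1.le]
  have hP1 : P (t * u) = ((1 + s * x) ^ α - 1) / (2 * α) := by
    rw [hP]; rw [mul_pow]
  have hP2 : P u = ((1 + x) ^ α - 1) / (2 * α) := hP u
  have hts : t ^ (2 * α) = s ^ α := by
    rw [hs, ← Real.rpow_natCast t 2, ← Real.rpow_mul (le_of_lt ht)]
    norm_num
  constructor
  · rw [hP1, hP2, hts, mul_div_assoc']
    gcongr
  · rw [hP1, hP2, mul_div_assoc']
    gcongr
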